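/- Let λ = (1,…,1) ∈ K^{d+1} and φ = φ^λ. For i ∈ {0,…,d}, let ψ_V^i : D → D be the linear map defined on basis vectors by ψ_V^i(b) = b + ε^{(i)}, and let ψ_E^i : D → D be the linear map defined on basis vectors by ψ_E^i(a) = a − ε^{(i)} if a_i ≥ 1 and ψ_E^i(a) = 0 if a_i = 0. Then for all i, j ∈ {0,…,d}: (1) ψ_E^i ∘ ψ_E^j = ψ_E^j ∘ ψ_E^i; (2) ψ_V^i ∘ ψ_V^j = ψ_V^j ∘ ψ_V^i; and (3) φ ∘ (ψ_E^i ⊗ id_D) = φ ∘ (id_D ⊗ ψ_V^i) − (id_D ⊗ ψ_V^i) ∘ φ as linear maps D ⊗ D → D ⊗ D. -/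

import Mathlib

section aux
variable {K : Type*} [Field K] {n : ℕ}

lemma choose_pascal_pi (b l : Fin n → ℕ) (i : Fin n) (hl : 1 ≤ l i) :
    (∏ j, ((((b + Pi.single i 1 : Fin n → ℕ)) j).choose (l j) : K)) =
      (∏ j, ((b j).choose (((l - Pi.single i 1 : Fin n → ℕ)) j) : K)) + ∏ j, ((b j).choose (l j) : K) := by
  rw [Fintype.prod_eq_mul_prod_compl i, Fintype.prod_eq_mul_prod_compl i,
    Fintype.prod_eq_mul_prod_compl i (fun j => ((b j).choose (l j) : K))]
  have h1 : ∀ j ∈ ({i}ᶜ : Finset (Fin n)), (((b + Pi.single i 1 : Fin n → ℕ) j).choose (l j) : K)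
      = ((b j).choose (l j) : K) := by
    intro j hj
    simp only [Finset.mem_compl, Finset.mem_singleton] at hj
    simp [Pi.single_apply, hj]
  have h2 : ∀ j ∈ ({i}ᶜ : Finset (Fin n)), ((b j).choose ((l - Pi.single i 1 : Fin n → ℕ) j) : K)
      = ((b j).choose (l j) : K) := by
    intro j hj
    simp only [Finset.mem_compl, Finset.mem_singleton] at hj
    simp [Pi.single_apply, hj]
  rw [Finset.prod_congr rfl h1, Finset.prod_congr rfl h2, ← add_mul]
  congr 1
  obtain ⟨k, hk⟩ : ∃ k, l i = k + 1 := ⟨l i - 1, by omega⟩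
  have hb : (b + Pi.single i 1 : Fin n → ℕ) i = b i + 1 := by simp
  have hl' : (l - Pi.single i 1 : Fin n → ℕ) i = k := by simp [hk]
  rw [hb, hl', hk, Nat.choose_succ_succ' (b i) k]
  push_cast
  ring
end aux

section key
variable {K : Type*} [Field K] {n : ℕ} {M : Type*} [AddCommGroup M] [Module K M]

lemma key_sum (F : (Fin n → ℕ) → (Fin n → ℕ) → M) (a b : Fin n → ℕ) (i : Fin n) :
    (if 1 ≤ a i then
      ∑ l ∈ Finset.Iic (fun j => min ((a - Pi.single i 1 : Fin n → ℕ) j) (b j)),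
        (∏ j, ((b j).choose (l j) : K)) • F ((a - Pi.single i 1 : Fin n → ℕ) - l) (b - l)
     else 0)
    + ∑ l ∈ Finset.Iic (fun j => min (a j) (b j)),
        (∏ j, ((b j).choose (l j) : K)) • F (a - l) ((b - l) + Pi.single i 1)
    = ∑ l ∈ Finset.Iic (fun j => min (a j) ((b + Pi.single i 1 : Fin n → ℕ) j)),
        (∏ j, (((b + Pi.single i 1 : Fin n → ℕ) j).choose (l j) : K)) •
          F (a - l) ((b + Pi.single i 1 : Fin n → ℕ) - l) := by
  set ε : Fin n → ℕ := Pi.single i 1 with hε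
  set S := Finset.Iic (fun j => min (a j) ((b + ε : Fin n → ℕ) j)) with hS
  rw [← Finset.sum_filter_add_sum_filter_not S (fun l => 1 ≤ l i)]
  have hPascal : ∑ l ∈ S.filter (fun l => 1 ≤ l i),
      (∏ j, (((b + ε : Fin n → ℕ) j).choose (l j) : K)) • F (a - l) ((b + ε : Fin n → ℕ) - l)
      = ∑ l ∈ S.filter (fun l => 1 ≤ l i),
          ((∏ j, ((b j).choose ((l - ε : Fin n → ℕ) j) : K)) • F (a - l) ((b + ε : Fin n → ℕ) - l)
          + (∏ j, ((b j).choose (l j) : K)) • F (a - l) ((b + ε : Fin n → ℕ) - l)) := by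
    apply Finset.sum_congr rfl
    intro l hl
    rw [Finset.mem_filter] at hl
    rw [choose_pascal_pi b l i hl.2, add_smul]
  rw [hPascal, Finset.sum_add_distrib]
  have hNoP : ∑ l ∈ S.filter (fun l => ¬ 1 ≤ l i),
      (∏ j, (((b + ε : Fin n → ℕ) j).choose (l j) : K)) • F (a - l) ((b + ε : Fin n → ℕ) - l)
      = ∑ l ∈ S.filter (fun l => ¬ 1 ≤ l i),
          (∏ j, ((b j).choose (l j) : K)) • F (a - l) ((b + ε : Fin n → ℕ) - l) := by
    apply Finset.sum_congr rfl
    intro l hl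
    rw [Finset.mem_filter] at hl
    have hli : l i = 0 := by omega
    congr 1
    apply Finset.prod_congr rfl
    intro j _
    by_cases hj : j = i
    · subst hj; simp [hε, hli]
    · simp [hε, Pi.single_apply, hj]
  rw [hNoP]
  rw [add_assoc, Finset.sum_filter_add_sum_filter_not]
  congr 1
  -- the shifted part
  · by_cases ha : 1 ≤ a i
    · rw [if_pos ha]
      apply Finset.sum_nbij' (i := fun m => m + ε) (j := fun l => l - ε)
      · intro m hm
        simp only [Finset.mem_Iic, Pi.le_def] at hm
        simp only [Finset.mem_filter, hS, Finset.mem_Iic, Pi.le_def]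
        constructor
        · intro j
          have := hm j
          by_cases hj : j = i <;> simp [hε, Pi.single_apply, hj] at this ⊢ <;> omega
        · simp [hε]
      · intro l hl
        rw [Finset.mem_filter] at hl
        obtain ⟨hlS, hli⟩ := hl
        rw [hS, Finset.mem_Iic, Pi.le_def] at hlS
        simp only [Finset.mem_Iic, Pi.le_def]
        intro j
        have := hlS j
        by_cases hj : j = i <;> simp [hε, Pi.single_apply, hj] at this ⊢ <;> omega
      · intro m hm
        funext j
        by_cases hj : j = i <;> simp [hε, Pi.single_apply, hj]
      · intro l hl
        rw [Finset.mem_filter] at hl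
        funext j
        by_cases hj : j = i
        · subst hj; simp [hε]; omega
        · simp [hε, Pi.single_apply, hj]
      · intro m hm
        simp only [Finset.mem_Iic, Pi.le_def] at hm
        have h1 : ((m + ε : Fin n → ℕ) - ε) = m := by
          funext j; by_cases hj : j = i <;> simp [hε, Pi.single_apply, hj]
        have h2 : (a - (m + ε) : Fin n → ℕ) = (a - ε : Fin n → ℕ) - m := by
          funext j
          by_cases hj : j = i <;> simp [hε, Pi.single_apply, hj] <;> omega
        have h3 : ((b + ε : Fin n → ℕ) - (m + ε)) = b - m := by
          funext j
          by_cases hj : j = i <;> simp [hε, Pi.single_apply, hj] <;> omega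
        rw [h1, h2, h3]
    · rw [if_neg ha]
      rw [eq_comm]
      apply Finset.sum_eq_zero
      intro l hl
      rw [Finset.mem_filter, hS, Finset.mem_Iic, Pi.le_def] at hl
      exfalso
      have := hl.1 i
      omega
  -- the unshifted part
  · have hcongr : ∑ l ∈ Finset.Iic (fun j => min (a j) (b j)),
        (∏ j, ((b j).choose (l j) : K)) • F (a - l) ((b - l) + ε)
        = ∑ l ∈ Finset.Iic (fun j => min (a j) (b j)),
          (∏ j, ((b j).choose (l j) : K)) • F (a - l) ((b + ε : Fin n → ℕ) - l) := by
      apply Finset.sum_congr rfl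
      intro l hl
      rw [Finset.mem_Iic, Pi.le_def] at hl
      have : ((b + ε : Fin n → ℕ) - l) = (b - l) + ε := by
        funext j
        have := hl j
        by_cases hj : j = i <;> simp [hε, Pi.single_apply, hj] at this ⊢ <;> omega
      rw [this]
    rw [hcongr]
    apply Finset.sum_subset
    · intro l hl
      rw [Finset.mem_Iic, Pi.le_def] at hl ⊢
      intro j
      have h := hl j
      by_cases hj : j = i
      · subst hj
        have hb : (b + ε : Fin n → ℕ) j = b j + 1 := by simp [hε]
        rw [hb]
        omega
      · have hb : (b + ε : Fin n → ℕ) j = b j := by simp [hε, Pi.single_apply, hj]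
        rw [hb]
        exact h
    · intro l hlS hl
      rw [Finset.mem_Iic, Pi.le_def] at hl
      push_neg at hl
      obtain ⟨j, hj⟩ := hl
      rw [hS, Finset.mem_Iic, Pi.le_def] at hlS
      have hjS := hlS j
      have hjb : b j < l j := by
        by_cases hji : j = i <;> simp [hε, Pi.single_apply, hji] at hjS hj ⊢ <;> omega
      have : ((b j).choose (l j) : K) = 0 := by
        rw [Nat.choose_eq_zero_of_lt hjb]; simp
      rw [Finset.prod_eq_zero (Finset.mem_univ j) this, zero_smul]
end key



open TensorProduct

/-- For `λ = (1,…,1)` and `φ = φ^λ`, the maps `ψ_V^i(b) = b + ε^{(i)}` and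
`ψ_E^i(a) = a − ε^{(i)}` if `a_i ≥ 1`, `ψ_E^i(a) = 0` if `a_i = 0`, satisfy: the `ψ_E^i`
pairwise commute, the `ψ_V^i` pairwise commute, and
`φ ∘ (ψ_E^i ⊗ id) = φ ∘ (id ⊗ ψ_V^i) − (id ⊗ ψ_V^i) ∘ φ`.  Here `D` is the free
`K`-vector space on `ℕ^{d+1}` (a vector space with a basis `e` indexed by `ℕ^{d+1}`). -/
theorem psi_phi_compatible (K : Type*) [Field K] [CharZero K] (d : ℕ)
    (D : Type*) [AddCommGroup D] [Module K D] (e : Module.Basis (Fin (d + 1) → ℕ) K D)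
    (φ : TensorProduct K D D →ₗ[K] TensorProduct K D D)
    (hφ : ∀ a b : Fin (d + 1) → ℕ,
      φ (e a ⊗ₜ e b) =
        ∑ l ∈ Finset.Iic (fun i => min (a i) (b i)),
          ((∏ i, (1 : K) ^ l i) * ∏ i, ((b i).choose (l i) : K)) •
            (e (a - l) ⊗ₜ[K] e (b - l)))
    (ψV ψE : Fin (d + 1) → (D →ₗ[K] D))
    (hψV : ∀ (i : Fin (d + 1)) (b : Fin (d + 1) → ℕ),
      ψV i (e b) = e (b + Pi.single i 1))
    (hψE : ∀ (i : Fin (d + 1)) (a : Fin (d + 1) → ℕ),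
      ψE i (e a) = if 1 ≤ a i then e (a - Pi.single i 1) else 0) :
    (∀ i j, ψE i ∘ₗ ψE j = ψE j ∘ₗ ψE i) ∧
      (∀ i j, ψV i ∘ₗ ψV j = ψV j ∘ₗ ψV i) ∧
      ∀ i, φ ∘ₗ LinearMap.rTensor D (ψE i) =
        φ ∘ₗ LinearMap.lTensor D (ψV i) - LinearMap.lTensor D (ψV i) ∘ₗ φ := by
  refine ⟨?_, ?_, ?_⟩
  · intro i j
    rcases eq_or_ne i j with rfl | hij
    · rfl
    apply Module.Basis.ext e
    intro a
    have hji := hij.symm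
    have hAij : (a - Pi.single j 1 : Fin (d+1) → ℕ) i = a i := by simp [Pi.single_apply, hij]
    have hAji : (a - Pi.single i 1 : Fin (d+1) → ℕ) j = a j := by simp [Pi.single_apply, hji]
    have hsub : (a - Pi.single j 1 - Pi.single i 1 : Fin (d+1) → ℕ)
        = a - Pi.single i 1 - Pi.single j 1 := by
      funext k
      simp only [Pi.sub_apply]
      omega
    by_cases h1 : 1 ≤ a i <;> by_cases h2 : 1 ≤ a j <;>
      simp [LinearMap.comp_apply, hψE, h1, h2, hAij, hAji, hsub]
  · intro i j
    apply Module.Basis.ext e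
    intro b
    simp only [LinearMap.comp_apply, hψV]
    rw [add_right_comm]
  · intro i
    apply Module.Basis.ext (e.tensorProduct e)
    rintro ⟨a, b⟩
    simp only [Module.Basis.tensorProduct_apply, LinearMap.comp_apply, LinearMap.sub_apply,
      LinearMap.rTensor_tmul, LinearMap.lTensor_tmul, LinearMap.id_apply, hψE, hψV]
    rw [TensorProduct.ite_tmul, apply_ite φ, map_zero, hφ, hφ]
    simp only [one_pow, Finset.prod_const_one, one_mul, map_sum, map_smul,
      LinearMap.lTensor_tmul, LinearMap.id_apply, hψV, hφ]
    rw [eq_sub_iff_add_eq]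
    exact key_sum (fun x y => e x ⊗ₜ[K] e y) a b i
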